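/- Let Ω ⊂ ℝⁿ be a bounded domain and φ ∈ Φ_w(Ω). (i) If there exists C ≥ 1 such that 1/C ≤ φ(x,1) ≤ C for a.e. x ∈ Ω, then φ satisfies (A0). (ii) Conversely, if φ satisfies (aDec)_q for some q < ∞ and (A0), then there exists C ≥ 1 such that 1/C ≤ φ(x,1) ≤ C for a.e. x ∈ Ω. -/

import Mathlib

open MeasureTheory Set Filter ENNReal NNReal Metric

noncomputable section

/-- `Ω` is a bounded domain (open, connected, bounded). -/
def BoundedDomain {n : ℕ} (Ω : Set (Fin n → ℝ)) : Prop :=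
  IsOpen Ω ∧ IsConnected Ω ∧ Bornology.IsBounded Ω

/-- `φ : Ω × [0,∞) → [0,∞]` is a Φ-prefunction. -/
def PhiPrefun {n : ℕ} (Ω : Set (Fin n → ℝ)) (φ : (Fin n → ℝ) → ℝ≥0 → ℝ≥0∞) : Prop :=
  (∀ t : ℝ≥0, Measurable fun x => φ x t) ∧
  (∀ x ∈ Ω, Monotone (φ x)) ∧
  (∀ x ∈ Ω, φ x 0 = 0) ∧
  (∀ x ∈ Ω, Tendsto (φ x) (nhdsWithin 0 (Ioi 0)) (nhds 0)) ∧
  (∀ x ∈ Ω, Tendsto (φ x) atTop (nhds ⊤))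

/-- `(aInc)_p` with constant `L` for every `x ∈ Ω`:
`t ↦ φ(x,t)/t^p` is `L`-almost increasing on `(0,∞)`. -/
def PhiAInc {n : ℕ} (Ω : Set (Fin n → ℝ)) (φ : (Fin n → ℝ) → ℝ≥0 → ℝ≥0∞)
    (p : ℝ) (L : ℝ≥0) : Prop :=
  ∀ x ∈ Ω, ∀ s t : ℝ≥0, 0 < s → s ≤ t →
    φ x s / (s : ℝ≥0∞) ^ p ≤ L * (φ x t / (t : ℝ≥0∞) ^ p)

/-- `φ` is a weak Φ-function on `Ω` with `(aInc)_1` constant `L`. -/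
def IsWeakPhi {n : ℕ} (Ω : Set (Fin n → ℝ)) (φ : (Fin n → ℝ) → ℝ≥0 → ℝ≥0∞)
    (L : ℝ≥0) : Prop :=
  PhiPrefun Ω φ ∧ 1 ≤ L ∧ PhiAInc Ω φ 1 L ∧
  ∀ x ∈ Ω, ∀ t : ℝ≥0, Tendsto (φ x) (nhdsWithin t (Iio t)) (nhds (φ x t))

/-- `(A0)` with constant `β`: `φ(x,β) ≤ 1 ≤ φ(x,1/β)` for a.e. `x ∈ Ω`. -/
def PhiA0 {n : ℕ} (Ω : Set (Fin n → ℝ)) (φ : (Fin n → ℝ) → ℝ≥0 → ℝ≥0∞)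
    (β : ℝ≥0) : Prop :=
  ∀ᵐ x ∂(volume : Measure (Fin n → ℝ)), x ∈ Ω → φ x β ≤ 1 ∧ 1 ≤ φ x β⁻¹

/-- `(aDec)_q` with constant `L`: `t ↦ φ(x,t)/t^q` is `L`-almost decreasing
on `(0,∞)` for a.e. `x ∈ Ω`. -/
def PhiADec {n : ℕ} (Ω : Set (Fin n → ℝ)) (φ : (Fin n → ℝ) → ℝ≥0 → ℝ≥0∞)
    (q : ℝ) (L : ℝ≥0) : Prop :=
  ∀ᵐ x ∂(volume : Measure (Fin n → ℝ)), x ∈ Ω → ∀ s t : ℝ≥0, 0 < s → s ≤ t →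
    φ x t / (t : ℝ≥0∞) ^ q ≤ L * (φ x s / (s : ℝ≥0∞) ^ q)

/-- `(aDec)_q^∞` with constant `L`: `t ↦ (φ(x,t)+1)/t^q` is `L`-almost decreasing
on `(0,∞)` for a.e. `x ∈ Ω`. -/
def PhiADecInf {n : ℕ} (Ω : Set (Fin n → ℝ)) (φ : (Fin n → ℝ) → ℝ≥0 → ℝ≥0∞)
    (q : ℝ) (L : ℝ≥0) : Prop :=
  ∀ᵐ x ∂(volume : Measure (Fin n → ℝ)), x ∈ Ω → ∀ s t : ℝ≥0, 0 < s → s ≤ t →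
    (φ x t + 1) / (t : ℝ≥0∞) ^ q ≤ L * ((φ x s + 1) / (s : ℝ≥0∞) ^ q)

/-- The left-inverse `φ⁻¹(x,τ) = inf {t ≥ 0 : φ(x,t) ≥ τ}`. -/
def phiInv {n : ℕ} (φ : (Fin n → ℝ) → ℝ≥0 → ℝ≥0∞) (x : Fin n → ℝ) (τ : ℝ≥0∞) : ℝ≥0∞ :=
  sInf ((fun t : ℝ≥0 => (t : ℝ≥0∞)) '' {t : ℝ≥0 | τ ≤ φ x t})

/-- `(A1)` with constant `β`: for every ball `B` and a.e. `x, y ∈ B ∩ Ω`,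
`β φ⁻¹(x,τ) ≤ φ⁻¹(y,τ)` for all `τ ∈ [1, 1/|B|]`. -/
def PhiA1 {n : ℕ} (Ω : Set (Fin n → ℝ)) (φ : (Fin n → ℝ) → ℝ≥0 → ℝ≥0∞)
    (β : ℝ≥0) : Prop :=
  ∀ (z : Fin n → ℝ) (ρ : ℝ), 0 < ρ →
    ∀ᵐ x ∂(volume : Measure (Fin n → ℝ)), ∀ᵐ y ∂(volume : Measure (Fin n → ℝ)),
      x ∈ Metric.ball z ρ ∩ Ω → y ∈ Metric.ball z ρ ∩ Ω →
      ∀ τ : ℝ≥0∞, 1 ≤ τ → τ ≤ (volume (Metric.ball z ρ))⁻¹ →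
        (β : ℝ≥0∞) * phiInv φ x τ ≤ phiInv φ y τ

/-- `(A1-n)` with constant `β`: for every ball `B` and a.e. `x, y ∈ B ∩ Ω`,
`φ(x,βt) ≤ φ(y,t)` for all `t ∈ [1, |B|^{-1/n}]`. -/
def PhiA1n {n : ℕ} (Ω : Set (Fin n → ℝ)) (φ : (Fin n → ℝ) → ℝ≥0 → ℝ≥0∞)
    (β : ℝ≥0) : Prop :=
  ∀ (z : Fin n → ℝ) (ρ : ℝ), 0 < ρ →
    ∀ᵐ x ∂(volume : Measure (Fin n → ℝ)), ∀ᵐ y ∂(volume : Measure (Fin n → ℝ)),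
      x ∈ Metric.ball z ρ ∩ Ω → y ∈ Metric.ball z ρ ∩ Ω →
      ∀ t : ℝ≥0, 1 ≤ t → (t : ℝ≥0∞) ≤ (volume (Metric.ball z ρ)) ^ (-(1 / (n : ℝ))) →
        φ x (β * t) ≤ φ y t

/-- Let `Ω ⊂ ℝⁿ` be a bounded domain and `φ ∈ Φ_w(Ω)`.
(i) If there is `C ≥ 1` with `1/C ≤ φ(x,1) ≤ C` for a.e. `x ∈ Ω`, then `φ`
satisfies `(A0)`. (ii) Conversely, if `φ` satisfies `(aDec)_q` for some `q < ∞`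
and `(A0)`, then there is `C ≥ 1` with `1/C ≤ φ(x,1) ≤ C` for a.e. `x ∈ Ω`. -/
theorem statement14 {n : ℕ} (Ω : Set (Fin n → ℝ)) (φ : (Fin n → ℝ) → ℝ≥0 → ℝ≥0∞)
    (L : ℝ≥0) (hΩ : BoundedDomain Ω) (hφ : IsWeakPhi Ω φ L) :
    ((∃ C : ℝ≥0, 1 ≤ C ∧ ∀ᵐ x ∂(volume : Measure (Fin n → ℝ)), x ∈ Ω →
        (C : ℝ≥0∞)⁻¹ ≤ φ x 1 ∧ φ x 1 ≤ (C : ℝ≥0∞)) →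
      ∃ β : ℝ≥0, 0 < β ∧ β ≤ 1 ∧ PhiA0 Ω φ β) ∧
    (∀ (q : ℝ) (L₁ : ℝ≥0), 1 ≤ q → 1 ≤ L₁ → PhiADec Ω φ q L₁ →
      (∃ β : ℝ≥0, 0 < β ∧ β ≤ 1 ∧ PhiA0 Ω φ β) →
      ∃ C : ℝ≥0, 1 ≤ C ∧ ∀ᵐ x ∂(volume : Measure (Fin n → ℝ)), x ∈ Ω →
        (C : ℝ≥0∞)⁻¹ ≤ φ x 1 ∧ φ x 1 ≤ (C : ℝ≥0∞)) := by
  obtain ⟨hpre, hL, hInc, hlc⟩ := hφ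
  constructor
  · rintro ⟨C, hC1, hC⟩
    have hLC : (1 : ℝ≥0) ≤ L * C := one_le_mul hL hC1
    have hLC0 : (L * C : ℝ≥0) ≠ 0 := by positivity
    refine ⟨(L * C)⁻¹, by positivity, inv_le_one_of_one_le₀ hLC, ?_⟩
    filter_upwards [hC] with x hCx hx
    obtain ⟨hlo, hhi⟩ := hCx hx
    have hβpos : (0 : ℝ≥0) < (L * C)⁻¹ := by positivity
    have hβ1 : ((L * C)⁻¹ : ℝ≥0) ≤ 1 := inv_le_one_of_one_le₀ hLC
    have hinv1 : (1 : ℝ≥0) ≤ ((L * C)⁻¹)⁻¹ := by rw [inv_inv]; exact hLC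
    constructor
    · have h1 := hInc x hx (L * C)⁻¹ 1 hβpos hβ1
      simp only [ENNReal.rpow_one, ENNReal.coe_one, div_one] at h1
      have h2 : φ x (L * C)⁻¹ / (((L * C)⁻¹ : ℝ≥0) : ℝ≥0∞) ≤ (L : ℝ≥0∞) * C :=
        h1.trans (mul_le_mul_right hhi L)
      have h3 : φ x (L * C)⁻¹ ≤ ((L : ℝ≥0∞) * C) * (((L * C)⁻¹ : ℝ≥0) : ℝ≥0∞) := by
        rw [← ENNReal.div_le_iff (by exact_mod_cast hβpos.ne') (by exact ENNReal.coe_ne_top)]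
        exact h2
      refine h3.trans_eq ?_
      rw [← ENNReal.coe_mul, ← ENNReal.coe_mul, ← ENNReal.coe_one]
      norm_cast
      rw [mul_inv_cancel₀ hLC0]
    · have h1 := hInc x hx 1 ((L * C)⁻¹)⁻¹ one_pos hinv1
      simp only [ENNReal.rpow_one, ENNReal.coe_one, div_one, inv_inv] at h1
      have h2 : (C : ℝ≥0∞)⁻¹ ≤ (L : ℝ≥0∞) * (φ x (L * C) / ((L * C : ℝ≥0) : ℝ≥0∞)) :=
        le_trans hlo h1
      have hC0 : (C : ℝ≥0∞) ≠ 0 := by exact_mod_cast (one_pos.trans_le hC1).ne'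
      have key : (1 : ℝ≥0∞) ≤ (C : ℝ≥0∞) *
          ((L : ℝ≥0∞) * (φ x (L * C) / ((L * C : ℝ≥0) : ℝ≥0∞))) := by
        calc (1 : ℝ≥0∞) = (C : ℝ≥0∞) * (C : ℝ≥0∞)⁻¹ := by
              rw [ENNReal.mul_inv_cancel hC0 ENNReal.coe_ne_top]
          _ ≤ _ := mul_le_mul_right h2 _
      have heq : (C : ℝ≥0∞) * ((L : ℝ≥0∞) * (φ x (L * C) / ((L * C : ℝ≥0) : ℝ≥0∞))) =
          φ x (L * C) := by
        rw [← mul_assoc, ← ENNReal.coe_mul, mul_comm C L,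
          ENNReal.mul_div_cancel (by exact_mod_cast hLC0) ENNReal.coe_ne_top]
      rw [heq] at key
      simpa [inv_inv] using key
  · rintro q L₁ hq hL₁ hDec ⟨β, hβ0, hβ1, hA0⟩
    have hβ0' : (β : ℝ≥0∞) ≠ 0 := by exact_mod_cast hβ0.ne'
    have hβinv1 : (1 : ℝ≥0) ≤ β⁻¹ := by rw [one_le_inv₀ hβ0]; exact hβ1
    have hL₁0 : (L₁ : ℝ≥0∞) ≠ 0 := by exact_mod_cast (one_pos.trans_le hL₁).ne'
    have hβq0 : ((β : ℝ≥0∞)) ^ q ≠ 0 := by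
      simp [ENNReal.rpow_eq_zero_iff, hβ0']
    have hβqt : ((β : ℝ≥0∞)) ^ q ≠ ⊤ := by
      simp [ENNReal.rpow_eq_top_iff, hβ0']
    have hcoe : ((β⁻¹ : ℝ≥0) : ℝ≥0∞) ^ q = ((β : ℝ≥0∞) ^ q)⁻¹ := by
      rw [ENNReal.coe_inv hβ0.ne', ← ENNReal.inv_rpow]
    refine ⟨L₁ * β⁻¹ ^ q, ?_, ?_⟩
    · exact one_le_mul hL₁ (one_le_rpow hβinv1 (by linarith))
    · have hcast : ((L₁ * β⁻¹ ^ q : ℝ≥0) : ℝ≥0∞) = (L₁ : ℝ≥0∞) * ((β : ℝ≥0∞) ^ q)⁻¹ := by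
        rw [ENNReal.coe_mul, ← hcoe, ENNReal.coe_rpow_of_ne_zero (by positivity)]
      filter_upwards [hA0, hDec] with x hA0x hDecx hx
      obtain ⟨hβle, hβge⟩ := hA0x hx
      constructor
      · -- lower bound
        have h1 := hDecx hx 1 β⁻¹ one_pos hβinv1
        simp only [ENNReal.coe_one, ENNReal.one_rpow, div_one] at h1
        have h2 : ((β : ℝ≥0∞) ^ q) ≤ (L₁ : ℝ≥0∞) * φ x 1 := by
          calc ((β : ℝ≥0∞) ^ q) = 1 / (((β⁻¹ : ℝ≥0) : ℝ≥0∞)) ^ q := by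
                rw [hcoe, one_div, inv_inv]
            _ ≤ φ x β⁻¹ / (((β⁻¹ : ℝ≥0) : ℝ≥0∞)) ^ q :=
                ENNReal.div_le_div_right hβge _
            _ ≤ (L₁ : ℝ≥0∞) * φ x 1 := h1
        have h3 : ((β : ℝ≥0∞) ^ q) / (L₁ : ℝ≥0∞) ≤ φ x 1 := by
          rw [ENNReal.div_le_iff hL₁0 ENNReal.coe_ne_top, mul_comm]
          exact h2
        refine le_trans (le_of_eq ?_) h3
        rw [hcast, ENNReal.mul_inv (Or.inl hL₁0) (Or.inl (by simpa using hβq0)),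
          inv_inv, div_eq_mul_inv, mul_comm]
      · -- upper bound
        have h1 := hDecx hx β 1 hβ0 hβ1
        simp only [ENNReal.coe_one, ENNReal.one_rpow, div_one] at h1
        calc φ x 1 ≤ (L₁ : ℝ≥0∞) * (φ x β / (β : ℝ≥0∞) ^ q) := h1
          _ ≤ (L₁ : ℝ≥0∞) * (1 / (β : ℝ≥0∞) ^ q) :=
              mul_le_mul_right (ENNReal.div_le_div_right hβle _) _
          _ = ((L₁ * β⁻¹ ^ q : ℝ≥0) : ℝ≥0∞) := by rw [hcast, one_div]
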